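/- (Theorem 1, ℓ1/soft-threshold case.) Let X be a real n×p matrix, y ∈ ℝⁿ, λ > 0, and η ≥ 0 such that the operator norm of Iₚ − η XᵀX is at most 1. Define F(β, γ) = ½‖y − Xβ − γ‖₂² + λ‖γ‖₁. Given (β, γ) ∈ ℝᵖ × ℝⁿ, set y_adj = y − γ, β' = β − η Xᵀ(Xβ − y_adj), r = y − Xβ', and γ' ∈ ℝⁿ coordinatewise by γ'ᵢ = S_λ(rᵢ), where S_λ(x) = sign(x)·max(|x| − λ, 0). Then F(β, γ) ≥ F(β', γ) ≥ F(β', γ'). -/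

import Mathlib

open Matrix RealInnerProductSpace

lemma opnorm_key {p : ℕ} (M : Matrix (Fin p) (Fin p) ℝ)
    (hop : ‖Matrix.toEuclideanCLM (𝕜 := ℝ) M‖ ≤ 1) (v : Fin p → ℝ) :
    -(∑ i, v i ^ 2) ≤ ∑ i, v i * M.mulVec v i := by
  set V : EuclideanSpace ℝ (Fin p) := (WithLp.equiv 2 _).symm v with hV
  set W : EuclideanSpace ℝ (Fin p) := (WithLp.equiv 2 _).symm (M.mulVec v) with hWdef
  have hW : Matrix.toEuclideanCLM (𝕜 := ℝ) M V = W :=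
    Matrix.toEuclideanCLM_toLp M v
  have hle := (Matrix.toEuclideanCLM (𝕜 := ℝ) M).le_opNorm V
  rw [hW] at hle
  have hnW : ‖W‖ ≤ ‖V‖ := by
    have := mul_le_mul_of_nonneg_right hop (norm_nonneg V)
    nlinarith [norm_nonneg V]
  have habs := abs_real_inner_le_norm V W
  have hCS : -(‖V‖ * ‖W‖) ≤ ⟪V, W⟫ := by
    have := neg_abs_le (⟪V, W⟫)
    linarith
  have hinner : ⟪V, W⟫ = ∑ i, v i * M.mulVec v i := by
    simp [PiLp.inner_apply, hV, hWdef, RCLike.inner_apply, WithLp.equiv_symm_apply, PiLp.toLp_apply, mul_comm]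
  have hnV : ‖V‖ ^ 2 = ∑ i, v i ^ 2 := by
    rw [EuclideanSpace.norm_eq, Real.sq_sqrt (by positivity)]
    simp [hV, WithLp.equiv_symm_apply, PiLp.toLp_apply, sq_abs]
  nlinarith [norm_nonneg V, norm_nonneg W, mul_le_mul_of_nonneg_left hnW (norm_nonneg V)]

/-- The soft threshold function `S_λ(x) = sign(x) · max(|x| − λ, 0)`. -/
noncomputable def softThreshold (lam : ℝ) (x : ℝ) : ℝ := Real.sign x * max (|x| - lam) 0

lemma soft_opt (lam x t : ℝ) (hlam : 0 < lam) :
    (x - softThreshold lam x) ^ 2 / 2 + lam * |softThreshold lam x| ≤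
      (x - t) ^ 2 / 2 + lam * |t| := by
  rcases le_or_gt |x| lam with h | h
  · have hS : softThreshold lam x = 0 := by
      simp [softThreshold, max_eq_right (by linarith : |x| - lam ≤ 0)]
    rw [hS]
    simp only [abs_zero, mul_zero, sub_zero, add_zero]
    have h1 : x * t ≤ |x| * |t| := by
      calc x * t ≤ |x * t| := le_abs_self _
      _ = |x| * |t| := abs_mul x t
    nlinarith [abs_nonneg t, mul_le_mul_of_nonneg_right h (abs_nonneg t), sq_nonneg t]
  · have hmax : max (|x| - lam) 0 = |x| - lam := max_eq_left (by linarith)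
    rcases lt_trichotomy x 0 with hx | hx | hx
    · have hS : softThreshold lam x = x + lam := by
        rw [softThreshold, hmax, Real.sign_of_neg hx, abs_of_neg hx]; ring
      rw [hS]
      have habs : |x + lam| = -(x + lam) := by
        rw [abs_of_neg hx] at h; rw [abs_of_nonpos (by linarith)]
      rw [habs]
      nlinarith [neg_abs_le t, sq_nonneg (x - t + lam)]
    · simp [hx, abs_of_nonneg (le_refl (0:ℝ))] at h; linarith
    · have hS : softThreshold lam x = x - lam := by
        rw [softThreshold, hmax, Real.sign_of_pos hx, abs_of_pos hx]; ring
      rw [hS]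
      have habs : |x - lam| = x - lam := by
        rw [abs_of_pos hx] at h; rw [abs_of_nonneg (by linarith)]
      rw [habs]
      nlinarith [le_abs_self t, sq_nonneg (x - t - lam)]

/-- The IGDTS objective with ℓ1 penalty:
`F(β, γ) = ½‖y − Xβ − γ‖₂² + λ‖γ‖₁`. -/
noncomputable def igdtsObj {n p : ℕ} (X : Matrix (Fin n) (Fin p) ℝ) (y : Fin n → ℝ)
    (lam : ℝ) (β : Fin p → ℝ) (γ : Fin n → ℝ) : ℝ :=
  (1 / 2) * (∑ i, (y i - X.mulVec β i - γ i) ^ 2) + lam * ∑ i, |γ i|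

theorem igdts_descent_soft (n p : ℕ)
    (X : Matrix (Fin n) (Fin p) ℝ) (y : Fin n → ℝ)
    (lam : ℝ) (hlam : 0 < lam) (η : ℝ) (hη : 0 ≤ η)
    (hop : ‖Matrix.toEuclideanCLM (𝕜 := ℝ)
        ((1 : Matrix (Fin p) (Fin p) ℝ) - η • (Xᵀ * X))‖ ≤ 1)
    (β : Fin p → ℝ) (γ : Fin n → ℝ)
    (yadj : Fin n → ℝ) (hyadj : yadj = y - γ)
    (β' : Fin p → ℝ) (hβ' : β' = β - η • (Xᵀ.mulVec (X.mulVec β - yadj)))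
    (r : Fin n → ℝ) (hr : r = y - X.mulVec β')
    (γ' : Fin n → ℝ) (hγ' : ∀ i, γ' i = softThreshold lam (r i)) :
    igdtsObj X y lam β' γ ≤ igdtsObj X y lam β γ ∧
      igdtsObj X y lam β' γ' ≤ igdtsObj X y lam β' γ := by
  set e : Fin n → ℝ := X.mulVec β - yadj with he
  set g : Fin p → ℝ := Xᵀ.mulVec e with hg
  set w : Fin n → ℝ := X.mulVec g with hw
  have hXβ' : X.mulVec β' = X.mulVec β - η • w := by
    rw [hβ', Matrix.mulVec_sub, Matrix.mulVec_smul]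
  constructor
  · -- gradient step decreases
    -- key inequality
    have hkey := opnorm_key _ hop g
    have hMg : ((1 : Matrix (Fin p) (Fin p) ℝ) - η • (Xᵀ * X)).mulVec g
        = g - η • ((Xᵀ * X).mulVec g) := by
      rw [Matrix.sub_mulVec, Matrix.smul_mulVec, Matrix.one_mulVec]
    rw [hMg] at hkey
    have hkey2 : η * ∑ j, g j * (Xᵀ * X).mulVec g j ≤ 2 * ∑ j, g j ^ 2 := by
      have hsplit : ∑ j, g j * (g - η • ((Xᵀ * X).mulVec g)) j
          = ∑ j, g j ^ 2 - η * ∑ j, g j * (Xᵀ * X).mulVec g j := by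
        rw [Finset.mul_sum, ← Finset.sum_sub_distrib]
        apply Finset.sum_congr rfl
        intro j _
        simp [Pi.sub_apply, Pi.smul_apply, smul_eq_mul]
        ring
      rw [hsplit] at hkey
      linarith
    -- identities
    have hA : ∑ i, e i * w i = ∑ j, g j ^ 2 := by
      have : ∑ i, e i * w i = e ⬝ᵥ (X.mulVec g) := rfl
      rw [this, Matrix.dotProduct_mulVec, ← Matrix.mulVec_transpose]
      simp [dotProduct, hg, sq]
    have hB : ∑ i, w i ^ 2 = ∑ j, g j * (Xᵀ * X).mulVec g j := by
      have h1 : ∑ j, g j * (Xᵀ * X).mulVec g j = g ⬝ᵥ ((Xᵀ * X).mulVec g) := rfl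
      rw [h1, ← Matrix.mulVec_mulVec, Matrix.dotProduct_mulVec, Matrix.vecMul_transpose]
      simp [dotProduct, hw, sq]
    -- rewrite residuals
    have hres : ∀ i, y i - X.mulVec β' i - γ i = -(e i) + η * w i := by
      intro i
      have : yadj i = y i - γ i := by rw [hyadj]; rfl
      have he2 : e i = X.mulVec β i - yadj i := rfl
      rw [hXβ']
      simp [Pi.sub_apply, Pi.smul_apply, smul_eq_mul, he2, this]
      ring
    have hres0 : ∀ i, y i - X.mulVec β i - γ i = -(e i) := by
      intro i
      have : yadj i = y i - γ i := by rw [hyadj]; rfl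
      have he2 : e i = X.mulVec β i - yadj i := rfl
      rw [he2, this]; ring
    unfold igdtsObj
    have hsum1 : ∑ i, (y i - X.mulVec β' i - γ i) ^ 2
        = ∑ i, (e i)^2 - 2 * η * ∑ i, e i * w i + η^2 * ∑ i, (w i)^2 := by
      calc ∑ i, (y i - X.mulVec β' i - γ i) ^ 2
          = ∑ i, ((e i)^2 - 2*η*(e i * w i) + η^2 * (w i)^2) := by
            apply Finset.sum_congr rfl
            intro i _
            rw [hres i]; ring
        _ = _ := by
            rw [Finset.sum_add_distrib, Finset.sum_sub_distrib, ← Finset.mul_sum,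
              ← Finset.mul_sum]
    have hsum0 : ∑ i, (y i - X.mulVec β i - γ i) ^ 2 = ∑ i, (e i)^2 := by
      apply Finset.sum_congr rfl
      intro i _
      rw [hres0 i]; ring
    rw [hsum1, hsum0, hA, hB]
    have hfin : η^2 * ∑ j, g j * (Xᵀ * X).mulVec g j ≤ 2 * η * ∑ j, g j ^ 2 := by
      have := mul_le_mul_of_nonneg_left hkey2 hη
      nlinarith
    linarith
  · -- thresholding step decreases
    have hres : ∀ c : Fin n → ℝ, ∀ i, y i - X.mulVec β' i - c i = r i - c i := by
      intro c i
      rw [hr]; rfl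
    unfold igdtsObj
    have key : ∑ i, ((r i - γ' i)^2/2 + lam * |γ' i|)
        ≤ ∑ i, ((r i - γ i)^2/2 + lam * |γ i|) := by
      apply Finset.sum_le_sum
      intro i _
      rw [hγ' i]
      exact soft_opt lam (r i) (γ i) hlam
    have expand : ∀ c : Fin n → ℝ,
        (1/2 : ℝ) * (∑ i, (y i - X.mulVec β' i - c i)^2) + lam * ∑ i, |c i|
          = ∑ i, ((r i - c i)^2/2 + lam * |c i|) := by
      intro c
      rw [Finset.sum_add_distrib, Finset.mul_sum, Finset.mul_sum]
      congr 1
      apply Finset.sum_congr rfl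
      intro i _
      rw [hres c i]; ring
    rw [expand γ, expand γ']
    exact key
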